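/- Assume q ≡ 3 (mod 8) or q ≡ 5 (mod 8). Then every Sylow 2-subgroup of SL₂(F) is isomorphic to the quaternion group of order 8 (i.e. to QuaternionGroup 2). -/

import Mathlib

open Matrix
open scoped MatrixGroups

open QuaternionGroup

section Aux
variable {G : Type*} [Group G] [Fintype G]

lemma pow_mod_helper {x : G} {m : ℕ} (hx : x ^ m = 1) (a : ℕ) : x ^ (a % m) = x ^ a := by
  conv_rhs => rw [← Nat.div_add_mod a m, pow_add, pow_mul, hx, one_pow, one_mul]

lemma order_cases (hcard : Fintype.card G = 8) (g : G) :
    orderOf g = 1 ∨ orderOf g = 2 ∨ orderOf g = 4 ∨ orderOf g = 8 := by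
  have h : orderOf g ∣ 8 := hcard ▸ orderOf_dvd_card
  have h8 : (8 : ℕ) = 2 ^ 3 := rfl
  rw [h8] at h
  obtain ⟨k, hk, hek⟩ := (Nat.dvd_prime_pow Nat.prime_two).mp h
  interval_cases k <;> simp_all

lemma quat_of_unique_involution (hcard : Fintype.card G = 8)
    (huniq : ∀ g h : G, orderOf g = 2 → orderOf h = 2 → g = h)
    (hno8 : ∀ g : G, orderOf g ≠ 8) :
    Nonempty (G ≃* QuaternionGroup 2) := by
  classical
  -- there is an element of order 4
  have hex4 : ∃ x : G, orderOf x = 4 := by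
    by_contra hno4
    push_neg at hno4
    have hord2 : ∀ g : G, g ≠ 1 → orderOf g = 2 := by
      intro g hg
      rcases order_cases hcard g with h | h | h | h
      · exact absurd (orderOf_eq_one_iff.mp h) hg
      · exact h
      · exact absurd h (hno4 g)
      · exact absurd h (hno8 g)
    have h2 : ({1} : Finset G)ᶜ.card = 7 := by
      rw [Finset.card_compl, hcard]; simp
    obtain ⟨g₁, hg₁, g₂, hg₂, hne⟩ := Finset.one_lt_card.mp (by omega : 1 < ({1} : Finset G)ᶜ.card)
    simp only [Finset.mem_compl, Finset.mem_singleton] at hg₁ hg₂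
    exact hne (huniq g₁ g₂ (hord2 g₁ hg₁) (hord2 g₂ hg₂))
  obtain ⟨x, hx⟩ := hex4
  set H := Subgroup.zpowers x with hH
  have hcardH : Nat.card H = 4 := by rw [hH, Nat.card_zpowers, hx]
  have hyex : ∃ y : G, y ∉ H := by
    by_contra hall
    push_neg at hall
    have : H = ⊤ := Subgroup.eq_top_iff' H |>.mpr hall
    rw [this, Subgroup.card_top, Nat.card_eq_fintype_card, hcard] at hcardH
    omega
  have hx2 : orderOf (x ^ 2) = 2 := by
    rw [orderOf_pow, hx]; norm_num
  have key : ∀ y : G, y ∉ H → y * y = x ^ 2 := by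
    intro y hy
    have hyne : y ≠ 1 := fun h => hy (h ▸ H.one_mem)
    have hy4 : orderOf y = 4 := by
      rcases order_cases hcard y with h | h | h | h
      · exact absurd (orderOf_eq_one_iff.mp h) hyne
      · exfalso
        have : y = x ^ 2 := huniq y (x ^ 2) h hx2
        exact hy (this ▸ H.pow_mem (Subgroup.mem_zpowers x) 2)
      · exact h
      · exact absurd h (hno8 y)
    have h2 : orderOf (y ^ 2) = 2 := by rw [orderOf_pow, hy4]; norm_num
    have := huniq (y ^ 2) (x ^ 2) h2 hx2
    rwa [pow_two] at this
  obtain ⟨y, hy⟩ := hyex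
  have hy2 : y * y = x ^ 2 := key y hy
  have hyxmem : y * x ∉ H := fun h => hy (by
    have : (y * x) * x⁻¹ ∈ H := H.mul_mem h (H.inv_mem (Subgroup.mem_zpowers x))
    simpa using this)
  have hyx2 : (y * x) * (y * x) = x ^ 2 := key (y * x) hyxmem
  have h1 : y * x * y = x := by
    have h : (y * x * y) * x = x ^ 2 := by rw [← hyx2]; group
    calc y * x * y = ((y * x * y) * x) * x⁻¹ := by group
      _ = x ^ 2 * x⁻¹ := by rw [h]
      _ = x := by group
  have hrel : y * x = x⁻¹ * y := by
    have hyinv : y⁻¹ = (x ^ 2)⁻¹ * y := by rw [← hy2]; group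
    calc y * x = (y * x * y) * y⁻¹ := by group
      _ = x * ((x ^ 2)⁻¹ * y) := by rw [h1, hyinv]
      _ = x⁻¹ * y := by group
  have hx4 : x ^ 4 = 1 := hx ▸ pow_orderOf_eq_one x
  -- commutation of y with powers of x
  have hcomm : ∀ m : ℕ, y * x ^ m = (x ^ m)⁻¹ * y := by
    intro m
    induction m with
    | zero => simp
    | succ k ih =>
      calc y * x ^ (k + 1) = (y * x ^ k) * x := by rw [pow_succ, mul_assoc]
        _ = (x ^ k)⁻¹ * (y * x) := by rw [ih]; group
        _ = (x ^ k)⁻¹ * (x⁻¹ * y) := by rw [hrel]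
        _ = (x ^ (k + 1))⁻¹ * y := by rw [pow_succ]; group
  have hcomm' : ∀ m : ℕ, x ^ m * y = y * (x ^ m)⁻¹ := by
    intro m
    have := hcomm m
    calc x ^ m * y = x ^ m * (y * x ^ m) * (x ^ m)⁻¹ := by group
      _ = x ^ m * ((x ^ m)⁻¹ * y) * (x ^ m)⁻¹ := by rw [this]
      _ = y * (x ^ m)⁻¹ := by group
  -- the function
  set f : ZMod (2 * 2) → G := fun i => x ^ i.val with hf
  have hf_add : ∀ i j : ZMod (2 * 2), f (i + j) = f i * f j := by
    intro i j
    show x ^ (i + j).val = x ^ i.val * x ^ j.val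
    rw [← pow_add, ZMod.val_add, pow_mod_helper (show x ^ (2 * 2) = 1 from hx4)]
  have hf_zero : f 0 = 1 := by
    show x ^ (0 : ZMod (2 * 2)).val = 1
    rw [ZMod.val_zero, pow_zero]
  have hf_neg : ∀ i : ZMod (2 * 2), f (-i) = (f i)⁻¹ := by
    intro i
    have : f i * f (-i) = 1 := by rw [← hf_add]; simp [hf_zero]
    exact (inv_eq_of_mul_eq_one_right this).symm
  have hf_two : f ((2 : ℕ) : ZMod (2 * 2)) = x ^ 2 := by
    show x ^ (((2 : ℕ) : ZMod (2 * 2))).val = x ^ 2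
    congr 1
  let φfun : QuaternionGroup 2 → G := fun g =>
    match g with
    | .a i => f i
    | .xa i => y * f i
  have hφmul : ∀ g h : QuaternionGroup 2, φfun (g * h) = φfun g * φfun h := by
    rintro (i | i) (j | j)
    · show f (i + j) = f i * f j
      exact hf_add i j
    · show y * f (j - i) = f i * (y * f j)
      rw [sub_eq_add_neg, hf_add, hf_neg]
      calc y * (f j * (f i)⁻¹) = (y * (f i)⁻¹) * f j := by
            have : f j * (f i)⁻¹ = (f i)⁻¹ * f j := by
              show x ^ j.val * (x ^ i.val)⁻¹ = (x ^ i.val)⁻¹ * x ^ j.val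
              group
            rw [this]; group
        _ = f i * (y * f j) := by
            have := hcomm' i.val
            show (y * (x ^ i.val)⁻¹) * x ^ j.val = x ^ i.val * (y * x ^ j.val)
            rw [← this]; group
    · show y * f (i + j) = (y * f i) * f j
      rw [hf_add]; group
    · show f (((2 : ℕ) : ZMod (2 * 2)) + j - i) = (y * f i) * (y * f j)
      rw [sub_eq_add_neg, hf_add, hf_add, hf_neg, hf_two]
      have hstep : f i * y = y * (f i)⁻¹ := hcomm' i.val
      calc x ^ 2 * f j * (f i)⁻¹
          = (y * y) * (f j * (f i)⁻¹) := by rw [hy2]; group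
        _ = y * (y * (f i)⁻¹) * f j := by
            have : f j * (f i)⁻¹ = (f i)⁻¹ * f j := by
              show x ^ j.val * (x ^ i.val)⁻¹ = (x ^ i.val)⁻¹ * x ^ j.val
              group
            rw [this]; group
        _ = y * (f i * y) * f j := by rw [hstep]
        _ = (y * f i) * (y * f j) := by group
  let φ : QuaternionGroup 2 →* G := ⟨⟨φfun, by show f 0 = 1; exact hf_zero⟩, hφmul⟩
  have hinj : Function.Injective φ := by
    rw [injective_iff_map_eq_one]
    rintro (i | i) hg
    · have : x ^ i.val = 1 := hg
      have h4 : (4 : ℕ) ∣ i.val := hx ▸ orderOf_dvd_of_pow_eq_one this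
      have : i.val < 4 := i.val_lt
      have : i.val = 0 := by omega
      have : i = 0 := (ZMod.val_eq_zero i).mp ‹i.val = 0›
      rw [this]; rfl
    · exfalso
      have : y * x ^ i.val = 1 := hg
      have : y = (x ^ i.val)⁻¹ := by
        calc y = (y * x ^ i.val) * (x ^ i.val)⁻¹ := by group
          _ = (x ^ i.val)⁻¹ := by rw [this]; group
      exact hy (this ▸ H.inv_mem (H.pow_mem (Subgroup.mem_zpowers x) i.val))
  have hbij : Function.Bijective φ := by
    rw [Fintype.bijective_iff_injective_and_card]
    exact ⟨hinj, by rw [QuaternionGroup.card, hcard]⟩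
  exact ⟨(MulEquiv.ofBijective φ hbij).symm⟩

end Aux

lemma SL2_involution {F : Type*} [Field F] (h2 : (2 : F) ≠ 0) (g : SL(2, F))
    (hg : g * g = 1) : g = 1 ∨ g = -1 := by
  have hM : (g : Matrix (Fin 2) (Fin 2) F) * g = 1 := by
    rw [← Matrix.SpecialLinearGroup.coe_mul, hg, Matrix.SpecialLinearGroup.coe_one]
  have hdet : (g : Matrix (Fin 2) (Fin 2) F).det = 1 := g.2
  rw [Matrix.det_fin_two] at hdet
  set a := (g : Matrix (Fin 2) (Fin 2) F) 0 0 with ha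
  set b := (g : Matrix (Fin 2) (Fin 2) F) 0 1 with hb
  set c := (g : Matrix (Fin 2) (Fin 2) F) 1 0 with hc
  set d := (g : Matrix (Fin 2) (Fin 2) F) 1 1 with hd
  have e00 : a * a + b * c = 1 := by
    have := congrFun (congrFun hM 0) 0
    simpa [Matrix.mul_apply, Fin.sum_univ_two, Matrix.one_apply] using this
  have e01 : a * b + b * d = 0 := by
    have := congrFun (congrFun hM 0) 1
    simpa [Matrix.mul_apply, Fin.sum_univ_two, Matrix.one_apply] using this
  have e10 : c * a + d * c = 0 := by
    have := congrFun (congrFun hM 1) 0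
    simpa [Matrix.mul_apply, Fin.sum_univ_two, Matrix.one_apply] using this
  have e11 : c * b + d * d = 1 := by
    have := congrFun (congrFun hM 1) 1
    simpa [Matrix.mul_apply, Fin.sum_univ_two, Matrix.one_apply] using this
  by_cases htr : a + d = 0
  · exact absurd (by linear_combination -e00 - hdet + a * htr : (2 : F) = 0) h2
  · have hb0 : b = 0 := by
      rcases mul_eq_zero.mp (show b * (a + d) = 0 by linear_combination e01) with h | h
      · exact h
      · exact absurd h htr
    have hc0 : c = 0 := by
      rcases mul_eq_zero.mp (show c * (a + d) = 0 by linear_combination e10) with h | h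
      · exact h
      · exact absurd h htr
    have ha2 : a * a = 1 := by rw [hb0] at e00; linear_combination e00
    have had : a * d = 1 := by rw [hb0] at hdet; linear_combination hdet
    have hda : d = a := by
      have ha0 : a ≠ 0 := fun h => by rw [h] at ha2; simp at ha2
      exact mul_left_cancel₀ ha0 (had.trans ha2.symm)
    rcases mul_self_eq_one_iff.mp ha2 with h1 | h1
    · left
      apply Subtype.ext
      rw [Matrix.SpecialLinearGroup.coe_one]
      ext i j
      fin_cases i <;> fin_cases j <;>
        simp [Matrix.one_apply, ← ha, ← hb, ← hc, ← hd, hb0, hc0, hda, h1]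
    · right
      apply Subtype.ext
      rw [Matrix.SpecialLinearGroup.coe_neg, Matrix.SpecialLinearGroup.coe_one]
      ext i j
      fin_cases i <;> fin_cases j <;>
        simp [Matrix.one_apply, ← ha, ← hb, ← hc, ← hd, hb0, hc0, hda, h1]

lemma SL2_no_order_eight {F : Type*} [Field F] (h2 : (2 : F) ≠ 0)
    (hsq : ¬ IsSquare (2 : F)) (g : SL(2, F)) : orderOf g ≠ 8 := by
  intro h8
  have hg8 : g ^ 8 = 1 := h8 ▸ pow_orderOf_eq_one g
  have hg4ne : g ^ 4 ≠ 1 := by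
    intro h
    have := orderOf_dvd_of_pow_eq_one h
    rw [h8] at this
    exact absurd (Nat.le_of_dvd (by norm_num) this) (by norm_num)
  have hsq4 : g ^ 4 * g ^ 4 = 1 := by rw [← pow_add]; norm_num [hg8]
  have hneg : g ^ 4 = -1 := (SL2_involution h2 (g ^ 4) hsq4).resolve_left hg4ne
  set M := (g : Matrix (Fin 2) (Fin 2) F) with hMdef
  have hdet : M.det = 1 := g.2
  rw [Matrix.det_fin_two] at hdet
  set a := M 0 0 with ha
  set b := M 0 1 with hb
  set c := M 1 0 with hc
  set d := M 1 1 with hd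
  set t := a + d with ht
  have hCH : M * M = t • M - 1 := by
    ext i j
    fin_cases i <;> fin_cases j <;>
      simp only [Matrix.mul_apply, Fin.sum_univ_two, Matrix.sub_apply, Matrix.smul_apply,
        Matrix.one_apply, smul_eq_mul] <;>
      simp [← ha, ← hb, ← hc, ← hd] <;>
      first
        | linear_combination -hdet - a * ht
        | linear_combination -b * ht
        | linear_combination -c * ht
        | linear_combination -hdet - d * ht
  have hM4 : M ^ 4 = -1 := by
    have : ((g ^ 4 : SL(2, F)) : Matrix (Fin 2) (Fin 2) F) = M ^ 4 :=
      Matrix.SpecialLinearGroup.coe_pow g 4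
    rw [hneg] at this
    rw [← this, Matrix.SpecialLinearGroup.coe_neg, Matrix.SpecialLinearGroup.coe_one]
  have h4' : M ^ 4 = (t ^ 3 - 2 * t) • M + (1 - t ^ 2) • (1 : Matrix (Fin 2) (Fin 2) F) := by
    have hp : M ^ 4 = (M * M) * (M * M) := by
      rw [show (4 : ℕ) = 2 * 2 from rfl, pow_mul, pow_two, pow_two]
    rw [hp, hCH]
    have h1 : (t • M) * (t • M) = (t * t) • (M * M) := by
      rw [Matrix.smul_mul, Matrix.mul_smul, smul_smul]
    have expand : (t • M - 1) * (t • M - 1)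
        = (t * t) • (M * M) - (2 * t) • M + 1 := by
      rw [sub_mul, mul_sub, mul_sub]
      simp only [mul_one, one_mul]
      rw [h1]
      module
    rw [expand, hCH]
    module
  rw [h4'] at hM4
  have E : ∀ i j, (t ^ 3 - 2 * t) * M i j + (1 - t ^ 2) * (1 : Matrix (Fin 2) (Fin 2) F) i j
      = -(1 : Matrix (Fin 2) (Fin 2) F) i j := by
    intro i j
    have := congrFun (congrFun hM4 i) j
    simpa [Matrix.add_apply, Matrix.smul_apply, Matrix.neg_apply, smul_eq_mul] using this
  by_cases hs : t ^ 3 - 2 * t = 0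
  · have h00 := E 0 0
    rw [hs] at h00
    simp [Matrix.one_apply, ← ha] at h00
    exact hsq ⟨t, by linear_combination h00⟩
  · have hb0 : b = 0 := by
      have h01 := E 0 1
      simp [Matrix.one_apply, ← hb] at h01
      first
        | exact h01.resolve_left hs
        | exact (mul_eq_zero.mp h01).resolve_left hs
    have hc0 : c = 0 := by
      have h10 := E 1 0
      simp [Matrix.one_apply, ← hc] at h10
      first
        | exact h10.resolve_left hs
        | exact (mul_eq_zero.mp h10).resolve_left hs
    have had : a = d := by
      have h00 := E 0 0
      have h11 := E 1 1
      simp [Matrix.one_apply, ← ha, ← hd] at h00 h11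
      exact mul_left_cancel₀ hs (by linear_combination h00 - h11)
    have ha2 : a * a = 1 := by linear_combination hdet + a * had + c * hb0
    have hsq1 : g * g = 1 := by
      apply Subtype.ext
      rw [Matrix.SpecialLinearGroup.coe_mul, Matrix.SpecialLinearGroup.coe_one, ← hMdef]
      ext i j
      fin_cases i <;> fin_cases j <;>
        simp only [Matrix.mul_apply, Fin.sum_univ_two] <;>
        norm_num [Matrix.one_apply] <;>
        simp only [← ha, ← hb, ← hc, ← hd]
      · linear_combination ha2 + c * hb0
      · linear_combination (a + d) * hb0
      · linear_combination (a + d) * hc0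
      · linear_combination ha2 + b * hc0 - (a + d) * had
    have : orderOf g ∣ 2 := orderOf_dvd_of_pow_eq_one (by rw [pow_two]; exact hsq1)
    rw [h8] at this
    exact absurd (Nat.le_of_dvd (by norm_num) this) (by norm_num)

lemma card_SL2 (F : Type*) [Field F] [Fintype F] :
    Nat.card SL(2, F)
      = (Fintype.card F - 1) * (Fintype.card F * (Fintype.card F + 1)) := by
  classical
  set q := Fintype.card F with hq
  let dethom : GL (Fin 2) F →* Fˣ := Matrix.GeneralLinearGroup.det
  have hker : ∀ u : GL (Fin 2) F,
      u ∈ dethom.ker ↔ ((u : Matrix (Fin 2) (Fin 2) F)).det = 1 := by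
    intro u
    rw [MonoidHom.mem_ker]
    constructor
    · intro h
      have := congrArg Units.val h
      simpa [dethom] using this
    · intro h
      apply Units.ext
      simpa [dethom] using h
  let e : SL(2, F) ≃* dethom.ker :=
  { toFun := fun g => ⟨Matrix.SpecialLinearGroup.toGL g, (hker _).mpr g.2⟩
    invFun := fun u =>
      ⟨((u : GL (Fin 2) F) : Matrix (Fin 2) (Fin 2) F), (hker _).mp u.2⟩
    left_inv := fun g => Subtype.ext rfl
    right_inv := fun u => Subtype.ext (Units.ext rfl)
    map_mul' := fun g h => Subtype.ext (Units.ext rfl) }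
  have hcards : Nat.card SL(2, F) = Nat.card dethom.ker := Nat.card_congr e.toEquiv
  have hsurj : Function.Surjective dethom := by
    intro u
    refine ⟨⟨Matrix.diagonal ![(u : F), 1], Matrix.diagonal ![((u⁻¹ : Fˣ) : F), 1], ?_, ?_⟩, ?_⟩
    · rw [Matrix.diagonal_mul_diagonal]
      ext i j
      fin_cases i <;> fin_cases j <;> simp [Matrix.diagonal_apply, Matrix.one_apply]
    · rw [Matrix.diagonal_mul_diagonal]
      ext i j
      fin_cases i <;> fin_cases j <;> simp [Matrix.diagonal_apply, Matrix.one_apply]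
    · apply Units.ext
      show (Matrix.diagonal ![(u : F), 1]).det = (u : F)
      rw [Matrix.det_diagonal, Fin.prod_univ_two]
      simp
  have hquot : Nat.card (GL (Fin 2) F ⧸ dethom.ker) = Nat.card Fˣ :=
    Nat.card_congr (QuotientGroup.quotientKerEquivOfSurjective dethom hsurj).toEquiv
  have hGL : Nat.card (GL (Fin 2) F) = (q ^ 2 - q ^ 0) * (q ^ 2 - q ^ 1) := by
    rw [Matrix.card_GL_field, Fin.prod_univ_two]
    norm_num
    rw [← hq]
  have hmul : Nat.card (GL (Fin 2) F)
      = Nat.card (GL (Fin 2) F ⧸ dethom.ker) * Nat.card dethom.ker :=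
    Subgroup.card_eq_card_quotient_mul_card_subgroup dethom.ker
  have hunits : Nat.card Fˣ = q - 1 := by
    rw [Nat.card_eq_fintype_card, Fintype.card_units]
  obtain ⟨m, hm⟩ : ∃ m, q = m + 2 := ⟨q - 2, by have := Fintype.one_lt_card (α := F); omega⟩
  rw [hquot, hunits, ← hcards] at hmul
  rw [hGL] at hmul
  have h0 : q ^ 0 = 1 := pow_zero q
  have e1 : q ^ 2 - q ^ 0 = (m + 1) * (m + 3) := by
    have h1 : q ^ 2 = m * m + 4 * m + 4 := by rw [hm]; ring
    have h2 : (m + 1) * (m + 3) = m * m + 4 * m + 3 := by ring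
    omega
  have e2 : q ^ 2 - q ^ 1 = (m + 2) * (m + 1) := by
    have h1 : q ^ 2 = m * m + 4 * m + 4 := by rw [hm]; ring
    have h2 : (m + 2) * (m + 1) = m * m + 3 * m + 2 := by ring
    have h3 : q ^ 1 = m + 2 := by rw [hm]; ring
    omega
  rw [e1, e2] at hmul
  have e3 : q - 1 = m + 1 := by omega
  rw [e3] at hmul
  have goal1 : (q - 1) * (q * (q + 1)) = (m + 1) * ((m + 2) * (m + 3)) := by
    rw [e3, hm]
  apply Nat.eq_of_mul_eq_mul_left (show 0 < m + 1 by omega)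
  rw [← hmul, goal1]
  ring

/-- If `q ≡ ±3 (mod 8)`, then every Sylow `2`-subgroup of `SL(2, F)` is isomorphic to
the quaternion group of order `8`. -/
theorem sylow_two_quaternion
    (F : Type*) [Field F] [Fintype F] (q : ℕ) (hq : Fintype.card F = q)
    (hmod : q % 8 = 3 ∨ q % 8 = 5) :
    ∀ P : Sylow 2 SL(2, F), Nonempty ((P : Subgroup SL(2, F)) ≃* QuaternionGroup 2) := by
  intro P
  classical
  have hnsq : ¬ IsSquare (2 : F) := by
    intro h
    rw [FiniteField.isSquare_two_iff, hq] at h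
    rcases hmod with hm | hm
    · exact h.1 hm
    · exact h.2 hm
  have h2F : (2 : F) ≠ 0 := by
    intro h
    exact hnsq ⟨0, by rw [h]; ring⟩
  have hcardG : Nat.card SL(2, F) = (q - 1) * (q * (q + 1)) := by
    rw [← hq]; exact card_SL2 F
  obtain ⟨k, hk⟩ : ∃ k, q = 8 * k + 3 ∨ q = 8 * k + 5 := ⟨q / 8, by omega⟩
  have hfact : (Nat.card SL(2, F)).factorization 2 = 3 := by
    obtain ⟨m, hm, hmodd⟩ : ∃ m, Nat.card SL(2, F) = 2 ^ 3 * m ∧ ¬ (2 ∣ m) := by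
      rcases hk with h | h
      · refine ⟨(4 * k + 1) * ((8 * k + 3) * (2 * k + 1)), ?_, ?_⟩
        · rw [hcardG, h]
          have h1 : 8 * k + 3 - 1 = 2 * (4 * k + 1) := by omega
          have h2 : 8 * k + 3 + 1 = 4 * (2 * k + 1) := by omega
          rw [h1, h2]; ring
        · have := (Odd.mul ⟨2 * k, by ring⟩
            (Odd.mul ⟨4 * k + 1, by ring⟩ (⟨k, by ring⟩ : Odd (2 * k + 1)) :
              Odd ((8 * k + 3) * (2 * k + 1))) :
              Odd ((4 * k + 1) * ((8 * k + 3) * (2 * k + 1))))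
          rw [Nat.odd_iff] at this
          omega
      · refine ⟨(2 * k + 1) * ((8 * k + 5) * (4 * k + 3)), ?_, ?_⟩
        · rw [hcardG, h]
          have h1 : 8 * k + 5 - 1 = 4 * (2 * k + 1) := by omega
          have h2 : 8 * k + 5 + 1 = 2 * (4 * k + 3) := by omega
          rw [h1, h2]; ring
        · have := (Odd.mul ⟨k, by ring⟩
            (Odd.mul ⟨4 * k + 2, by ring⟩ (⟨2 * k + 1, by ring⟩ : Odd (4 * k + 3)) :
              Odd ((8 * k + 5) * (4 * k + 3))) :
              Odd ((2 * k + 1) * ((8 * k + 5) * (4 * k + 3))))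
          rw [Nat.odd_iff] at this
          omega
    have hm0 : m ≠ 0 := by rintro rfl; exact hmodd ⟨0, rfl⟩
    rw [hm, Nat.factorization_mul (by positivity) hm0]
    rw [Finsupp.add_apply, Nat.Prime.factorization_pow Nat.prime_two,
      Nat.factorization_eq_zero_of_not_dvd hmodd]
    simp
  haveI : Fintype ↥(P : Subgroup SL(2, F)) := Fintype.ofFinite _
  have hcardP : Fintype.card ↥(P : Subgroup SL(2, F)) = 8 := by
    rw [← Nat.card_eq_fintype_card]
    have := Sylow.card_eq_multiplicity P
    rw [hfact] at this
    simpa using this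
  have huniq : ∀ g h : ↥(P : Subgroup SL(2, F)),
      orderOf g = 2 → orderOf h = 2 → g = h := by
    intro g h hg hh
    have hg' : orderOf (g : SL(2, F)) = 2 := by rw [Subgroup.orderOf_coe]; exact hg
    have hh' : orderOf (h : SL(2, F)) = 2 := by rw [Subgroup.orderOf_coe]; exact hh
    have hgsq : (g : SL(2, F)) * g = 1 := by
      have h2 := pow_orderOf_eq_one (g : SL(2, F))
      rw [hg'] at h2
      rwa [pow_two] at h2
    have hhsq : (h : SL(2, F)) * h = 1 := by
      have h2 := pow_orderOf_eq_one (h : SL(2, F))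
      rw [hh'] at h2
      rwa [pow_two] at h2
    have hgne : (g : SL(2, F)) ≠ 1 := by
      intro he; rw [he] at hg'; simp at hg'
    have hhne : (h : SL(2, F)) ≠ 1 := by
      intro he; rw [he] at hh'; simp at hh'
    have hg1 : (g : SL(2, F)) = -1 :=
      (SL2_involution h2F _ hgsq).resolve_left hgne
    have hh1 : (h : SL(2, F)) = -1 :=
      (SL2_involution h2F _ hhsq).resolve_left hhne
    exact Subtype.ext (hg1.trans hh1.symm)
  have hno8 : ∀ g : ↥(P : Subgroup SL(2, F)), orderOf g ≠ 8 := by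
    intro g hg
    exact SL2_no_order_eight h2F hnsq (g : SL(2, F))
      (by rw [Subgroup.orderOf_coe]; exact hg)
  exact quat_of_unique_involution hcardP huniq hno8
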